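/- Let T be a self-orthogonal subcategory of an extriangulated category C with enough projectives and injectives. Then E^i(X₁, X₂) = 0 for all i ≥ 1, all X₁ ∈ Ť (the subcategory of objects admitting a finite T-coresolution), and all X₂ ∈ T^⊥. -/

import Mathlib

open CategoryTheory Opposite Limits

universe v u

namespace ExtTilting

variable (C : Type u) [Category.{v} C] [Preadditive C] [HasFiniteBiproducts C] [HasBinaryBiproducts C]

/-- A Krull-Schmidt category: every object is a finite biproduct of objects
with local endomorphism rings. -/
def IsKrullSchmidt : Prop :=
  ∀ X : C, ∃ (n : ℕ) (f : Fin n → C),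
    (∀ i, IsLocalRing (End (f i))) ∧ Nonempty (X ≅ ⨁ f)

/-- An extriangulated category structure (Nakaoka–Palu) on an additive category `C`:
a biadditive functor `E : Cᵒᵖ × C ⥤ Ab` together with a realization of each
`E`-extension `δ ∈ E(X, A)` by conflations `A ⟶ B ⟶ X`, satisfying (ET1)–(ET4)
and their duals.  `IsConf f g δ` means that the sequence `A ⟶ B ⟶ X` given by
`f, g` realizes the extension `δ`. -/
structure ExtCat where
  /-- the biadditive functor `E : Cᵒᵖ × C ⥤ Ab`; `E(X, A) = (E.obj (op X)).obj A` -/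
  E : Cᵒᵖ ⥤ C ⥤ AddCommGrpCat.{v}
  E_additive_right : ∀ X : Cᵒᵖ, (E.obj X).Additive
  E_additive_left : ∀ A : C, (E.flip.obj A).Additive
  /-- `IsConf f g δ`: the sequence `A ⟶ B ⟶ X` realizes `δ ∈ E(X, A)` -/
  IsConf : ∀ {A B X : C}, (A ⟶ B) → (B ⟶ X) → ((E.obj (op X)).obj A) → Prop
  /-- every extension is realized by some conflation -/
  real_exists : ∀ {A X : C} (δ : (E.obj (op X)).obj A),
    ∃ (B : C) (f : A ⟶ B) (g : B ⟶ X), IsConf f g δ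
  /-- any two realizations of the same extension are equivalent -/
  real_unique : ∀ {A B B' X : C} {f : A ⟶ B} {g : B ⟶ X} {f' : A ⟶ B'} {g' : B' ⟶ X}
      {δ : (E.obj (op X)).obj A}, IsConf f g δ → IsConf f' g' δ →
      ∃ b : B ≅ B', f ≫ b.hom = f' ∧ b.hom ≫ g' = g
  /-- the zero extension is realized by the split sequence -/
  real_zero : ∀ A X : C,
    IsConf (biprod.inl : A ⟶ A ⊞ X) (biprod.snd : A ⊞ X ⟶ X) (0 : (E.obj (op X)).obj A)
  /-- realization of morphisms of extensions -/
  real_map : ∀ {A B X A' B' X' : C} {f : A ⟶ B} {g : B ⟶ X} {f' : A' ⟶ B'} {g' : B' ⟶ X'}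
      {δ : (E.obj (op X)).obj A} {δ' : (E.obj (op X')).obj A'}
      (a : A ⟶ A') (c : X ⟶ X'),
      IsConf f g δ → IsConf f' g' δ' →
      (E.obj (op X)).map a δ = (E.map c.op).app A' δ' →
      ∃ b : B ⟶ B', f ≫ b = a ≫ f' ∧ b ≫ g' = g ≫ c
  /-- (ET3) -/
  et3 : ∀ {A B X A' B' X' : C} {f : A ⟶ B} {g : B ⟶ X} {f' : A' ⟶ B'} {g' : B' ⟶ X'}
      {δ : (E.obj (op X)).obj A} {δ' : (E.obj (op X')).obj A'}
      (a : A ⟶ A') (b : B ⟶ B'),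
      IsConf f g δ → IsConf f' g' δ' → f ≫ b = a ≫ f' →
      ∃ c : X ⟶ X', g ≫ c = b ≫ g' ∧
        (E.obj (op X)).map a δ = (E.map c.op).app A' δ'
  /-- (ET3ᵒᵖ) -/
  et3op : ∀ {A B X A' B' X' : C} {f : A ⟶ B} {g : B ⟶ X} {f' : A' ⟶ B'} {g' : B' ⟶ X'}
      {δ : (E.obj (op X)).obj A} {δ' : (E.obj (op X')).obj A'}
      (b : B ⟶ B') (c : X ⟶ X'),
      IsConf f g δ → IsConf f' g' δ' → g ≫ c = b ≫ g' →
      ∃ a : A ⟶ A', f ≫ b = a ≫ f' ∧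
        (E.obj (op X)).map a δ = (E.map c.op).app A' δ'
  /-- (ET4) -/
  et4 : ∀ {A B D F : C} {Cc : C} {f : A ⟶ B} {f' : B ⟶ D} {g : B ⟶ Cc} {g' : Cc ⟶ F}
      {δ : (E.obj (op D)).obj A} {δ' : (E.obj (op F)).obj B},
      IsConf f f' δ → IsConf g g' δ' →
      ∃ (Ee : C) (d : D ⟶ Ee) (e : Ee ⟶ F) (h' : Cc ⟶ Ee)
        (δ'' : (E.obj (op Ee)).obj A),
        IsConf (f ≫ g) h' δ'' ∧
        IsConf d e ((E.obj (op F)).map f' δ') ∧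
        g ≫ h' = f' ≫ d ∧ h' ≫ e = g' ∧
        (E.map d.op).app A δ'' = δ ∧
        (E.obj (op Ee)).map f δ'' = (E.map e.op).app B δ'
  /-- (ET4ᵒᵖ) -/
  et4op : ∀ {D A B F : C} {Cc : C} {f' : D ⟶ A} {f : A ⟶ B} {g' : F ⟶ B} {g : B ⟶ Cc}
      {δ : (E.obj (op B)).obj D} {δ' : (E.obj (op Cc)).obj F},
      IsConf f' f δ → IsConf g' g δ' →
      ∃ (Ee : C) (d : D ⟶ Ee) (e : Ee ⟶ F) (h' : Ee ⟶ A)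
        (δ'' : (E.obj (op Cc)).obj Ee),
        IsConf h' (f ≫ g) δ'' ∧
        IsConf d e ((E.map g'.op).app D δ) ∧
        d ≫ h' = f' ∧ e ≫ g' = h' ≫ f ∧
        (E.obj (op Cc)).map e δ'' = δ' ∧
        (E.obj (op B)).map d δ = (E.map g.op).app Ee δ''

/-- An extriangulated category with enough projectives and enough injectives,
together with chosen syzygies `Ω` and cosyzygies `Susp` (used to define the
higher extension groups `E^{i+1}(X, A) = E(X, Suspᶦ A)`). -/
structure ECat extends ExtCat C where
  /-- chosen projective cover object -/
  P : C → C
  /-- chosen syzygy -/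
  Ω : C → C
  ιP : ∀ X : C, Ω X ⟶ P X
  πP : ∀ X : C, P X ⟶ X
  δP : ∀ X : C, (E.obj (op X)).obj (Ω X)
  confP : ∀ X : C, IsConf (ιP X) (πP X) (δP X)
  P_projective : ∀ (X A : C) (δ : (E.obj (op (P X))).obj A), δ = 0
  /-- chosen injective hull object -/
  I : C → C
  /-- chosen cosyzygy -/
  Susp : C → C
  ιI : ∀ A : C, A ⟶ I A
  πI : ∀ A : C, I A ⟶ Susp A
  δI : ∀ A : C, (E.obj (op (Susp A))).obj A
  confI : ∀ A : C, IsConf (ιI A) (πI A) (δI A)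
  I_injective : ∀ (A X : C) (δ : (E.obj (op X)).obj (I A)), δ = 0

namespace ECat

variable {C} (𝒞 : ECat C)

/-- The group `E(X, A)` of `E`-extensions. -/
def Eext (X A : C) : AddCommGrpCat.{v} := (𝒞.E.obj (op X)).obj A

/-- `Tri A B X` : there is an `E`-triangle `A ⟶ B ⟶ X`. -/
def Tri (A B X : C) : Prop :=
  ∃ (f : A ⟶ B) (g : B ⟶ X) (δ : 𝒞.Eext X A), 𝒞.IsConf f g δ

/-- projective objects: `E(P, A) = 0` for all `A` -/
def Projective (P : C) : Prop := ∀ (A : C) (δ : 𝒞.Eext P A), δ = 0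

/-- injective objects: `E(X, I) = 0` for all `X` -/
def Injective (I : C) : Prop := ∀ (X : C) (δ : 𝒞.Eext X I), δ = 0

/-- `extVanish i X A` says that the higher extension group
`E^{i+1}(X, A) = E(X, Suspᶦ A)` vanishes. -/
def extVanish (i : ℕ) (X A : C) : Prop := ∀ δ : 𝒞.Eext X (𝒞.Susp^[i] A), δ = 0

/-- `S^⊥ = {Y | E^i(T, Y) = 0 for all i ≥ 1, T ∈ S}` -/
def rperp (S : Set C) : Set C := {Y | ∀ T ∈ S, ∀ i : ℕ, 𝒞.extVanish i T Y}

/-- `^⊥S = {Y | E^i(Y, T) = 0 for all i ≥ 1, T ∈ S}` -/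
def lperp (S : Set C) : Set C := {Y | ∀ T ∈ S, ∀ i : ℕ, 𝒞.extVanish i Y T}

/-- `S^{⊥₁} = {Y | E(T, Y) = 0 for all T ∈ S}` -/
def rperp1 (S : Set C) : Set C := {Y | ∀ T ∈ S, ∀ δ : 𝒞.Eext T Y, δ = 0}

/-- `^{⊥₁}S = {Y | E(Y, T) = 0 for all T ∈ S}` -/
def lperp1 (S : Set C) : Set C := {Y | ∀ T ∈ S, ∀ δ : 𝒞.Eext Y T, δ = 0}

/-- self-orthogonal subcategory: `E^i(T₁, T₂) = 0` for all `i ≥ 1`, `T₁, T₂ ∈ S` -/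
def SelfOrth (S : Set C) : Prop := ∀ T₁ ∈ S, ∀ T₂ ∈ S, ∀ i : ℕ, 𝒞.extVanish i T₁ T₂

/-- `Resol S n A' A` : there is an `E`-triangle sequence
`A' → S_n → ⋯ → S_1 → A` with all `S_i ∈ S`. -/
def Resol (S : Set C) : ℕ → C → C → Prop
  | 0, A', A => A' = A
  | n + 1, A', A => ∃ T K, T ∈ S ∧ 𝒞.Tri K T A ∧ Resol S n A' K

/-- `Coresol S n A A'` : there is an `E`-triangle sequence
`A → S_1 → ⋯ → S_n → A'` with all `S_i ∈ S`. -/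
def Coresol (S : Set C) : ℕ → C → C → Prop
  | 0, A, A' => A = A'
  | n + 1, A, A' => ∃ T K, T ∈ S ∧ 𝒞.Tri A T K ∧ Coresol S n K A'

/-- `Pres S n` : objects `A` admitting an `E`-triangle sequence
`A' → S_n → ⋯ → S_1 → A` with all `S_i ∈ S`. -/
def Pres (S : Set C) (n : ℕ) : Set C := {A | ∃ A', Resol 𝒞 S n A' A}

/-- `Copres S n` : objects `A` admitting an `E`-triangle sequence
`A → S_1 → ⋯ → S_n → A'` with all `S_i ∈ S`. -/
def Copres (S : Set C) (n : ℕ) : Set C := {A | ∃ A', Coresol 𝒞 S n A A'}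

/-- `Š_n` : objects admitting a finite `S`-coresolution `A → S_0 → ⋯ → S_n`. -/
def CheckN (S : Set C) : ℕ → Set C
  | 0 => S
  | n + 1 => {A | ∃ T K, T ∈ S ∧ 𝒞.Tri A T K ∧ K ∈ CheckN S n}

/-- `Ŝ_n` : objects admitting a finite `S`-resolution `S_n → ⋯ → S_0 → A`. -/
def HatN (S : Set C) : ℕ → Set C
  | 0 => S
  | n + 1 => {A | ∃ T K, T ∈ S ∧ 𝒞.Tri K T A ∧ K ∈ HatN S n}

/-- `Š = ⋃ₙ Š_n` -/
def Check (S : Set C) : Set C := ⋃ n : ℕ, CheckN 𝒞 S n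

/-- `Ŝ = ⋃ₙ Ŝ_n` -/
def Hat (S : Set C) : Set C := ⋃ n : ℕ, HatN 𝒞 S n

/-- projective dimension at most `n` : there is a projective resolution of length `n` -/
def projDimLE (A : C) (n : ℕ) : Prop := A ∈ HatN 𝒞 {P | 𝒞.Projective P} n

/-- injective dimension at most `n` -/
def injDimLE (A : C) (n : ℕ) : Prop := A ∈ CheckN 𝒞 {I | 𝒞.Injective I} n

/-- `S` is a generator for `Y` : `S ⊆ Y` and every `A ∈ Y` admits an
`E`-triangle `A' → T → A` with `T ∈ S`, `A' ∈ Y`. -/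
def GeneratorFor (S Y : Set C) : Prop :=
  S ⊆ Y ∧ ∀ A ∈ Y, ∃ A' T, T ∈ S ∧ A' ∈ Y ∧ 𝒞.Tri A' T A

/-- `S` is a cogenerator for `Y` : `S ⊆ Y` and every `A ∈ Y` admits an
`E`-triangle `A → T → A'` with `T ∈ S`, `A' ∈ Y`. -/
def CogeneratorFor (S Y : Set C) : Prop :=
  S ⊆ Y ∧ ∀ A ∈ Y, ∃ A' T, T ∈ S ∧ A' ∈ Y ∧ 𝒞.Tri A T A'

/-- `_S X` : objects `A` admitting an `E`-triangle sequence
`⋯ → T₁ → T₀ → A` with all `Tᵢ ∈ S` and all cocones in `S^⊥`. -/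
def genSub (S : Set C) : Set C :=
  {A | ∃ K T : ℕ → C, (∀ n, T n ∈ S) ∧ (∀ n, K n ∈ 𝒞.rperp S) ∧
    𝒞.Tri (K 0) (T 0) A ∧ ∀ n, 𝒞.Tri (K (n + 1)) (T (n + 1)) (K n)}

/-- `X_S` : objects `A` admitting an `E`-triangle sequence
`A → T₀ → T₁ → ⋯` with all `Tᵢ ∈ S` and all cones in `^⊥S`. -/
def cogenSub (S : Set C) : Set C :=
  {A | ∃ K T : ℕ → C, (∀ n, T n ∈ S) ∧ (∀ n, K n ∈ 𝒞.lperp S) ∧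
    𝒞.Tri A (T 0) (K 0) ∧ ∀ n, 𝒞.Tri (K n) (T (n + 1)) (K (n + 1))}

/-- closed under extensions -/
def ClosedExt (S : Set C) : Prop :=
  ∀ A B X : C, 𝒞.Tri A B X → A ∈ S → X ∈ S → B ∈ S

/-- closed under cones of inflations (resp. of deflations) -/
def ClosedCone (S : Set C) : Prop :=
  ∀ A B X : C, 𝒞.Tri A B X → A ∈ S → B ∈ S → X ∈ S

/-- closed under cocones of deflations -/
def ClosedCocone (S : Set C) : Prop :=
  ∀ A B X : C, 𝒞.Tri A B X → B ∈ S → X ∈ S → A ∈ S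

/-- closed under direct summands -/
def ClosedSummands (S : Set C) : Prop :=
  ∀ A B : C, (A ⊞ B) ∈ S → A ∈ S ∧ B ∈ S

/-- closed under isomorphisms -/
def ClosedIso (S : Set C) : Prop := ∀ A B : C, (A ≅ B) → A ∈ S → B ∈ S

/-- coresolving : contains the injectives, closed under extensions and
cones of deflations -/
def Coresolving (S : Set C) : Prop :=
  (∀ I : C, 𝒞.Injective I → I ∈ S) ∧ 𝒞.ClosedExt S ∧ 𝒞.ClosedCone S

/-- resolving : contains the projectives, closed under extensions and
cocones of inflations -/
def Resolving (S : Set C) : Prop :=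
  (∀ P : C, 𝒞.Projective P → P ∈ S) ∧ 𝒞.ClosedExt S ∧ 𝒞.ClosedCocone S

/-- `g : T ⟶ A` is a right `S`-approximation of `A` -/
def IsRightApprox (S : Set C) {T A : C} (g : T ⟶ A) : Prop :=
  T ∈ S ∧ ∀ T' ∈ S, ∀ h : T' ⟶ A, ∃ k : T' ⟶ T, k ≫ g = h

/-- `g : A ⟶ T` is a left `S`-approximation of `A` -/
def IsLeftApprox (S : Set C) {A T : C} (g : A ⟶ T) : Prop :=
  T ∈ S ∧ ∀ T' ∈ S, ∀ h : A ⟶ T', ∃ k : T ⟶ T', g ≫ k = h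

/-- contravariantly finite : every object has a right `S`-approximation -/
def ContravariantlyFinite (S : Set C) : Prop :=
  ∀ A : C, ∃ (T : C) (g : T ⟶ A), IsRightApprox S g

/-- covariantly finite : every object has a left `S`-approximation -/
def CovariantlyFinite (S : Set C) : Prop :=
  ∀ A : C, ∃ (T : C) (g : A ⟶ T), IsLeftApprox S g

/-- tilting subcategory of projective dimension `n` -/
def IsTilting (S : Set C) (n : ℕ) : Prop :=
  ClosedSummands S ∧ (∀ T ∈ S, 𝒞.projDimLE T n) ∧ 𝒞.GeneratorFor S (𝒞.rperp S)

/-- cotilting subcategory of injective dimension `n` -/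
def IsCotilting (S : Set C) (n : ℕ) : Prop :=
  ClosedSummands S ∧ (∀ T ∈ S, 𝒞.injDimLE T n) ∧ 𝒞.CogeneratorFor S (𝒞.lperp S)

end ECat

end ExtTilting

namespace ExtTilting
open ECat
variable {C : Type u} [Category.{v} C] [Preadditive C]
  [HasFiniteBiproducts C] [HasBinaryBiproducts C]

/-- If `X → T → K` is a conflation with extension `δ` and `c : X ⟶ W` kills `δ`,
then `c` extends along `X ⟶ T`. -/
lemma extend_lemma (𝒞 : ECat C) {X T K W : C} {f : X ⟶ T} {g : T ⟶ K}
    {δ : (𝒞.E.obj (op K)).obj X} (hconf : 𝒞.IsConf f g δ) (c : X ⟶ W)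
    (h : ((𝒞.E.obj (op K)).map c) δ = 0) : ∃ c' : T ⟶ W, f ≫ c' = c := by
  have hcond : ((𝒞.E.obj (op K)).map c) δ = (𝒞.E.map (𝟙 K).op).app W 0 := by
    rw [h]; simp
  obtain ⟨b, hb1, hb2⟩ := 𝒞.real_map c (𝟙 K) hconf (𝒞.real_zero W K) hcond
  exact ⟨b ≫ biprod.fst, by rw [← Category.assoc, hb1]; simp⟩

/-- Every extension `ε ∈ E(X, Z)` is of the form `c^* (δI Z)` for some
`c : X ⟶ Susp Z`. -/
lemma ext_of_hom (𝒞 : ECat C) {X Z : C} (ε : (𝒞.E.obj (op X)).obj Z) :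
    ∃ c : X ⟶ 𝒞.Susp Z, ε = (𝒞.E.map c.op).app Z (𝒞.δI Z) := by
  obtain ⟨B, a, b, hab⟩ := 𝒞.real_exists ε
  have h0 : ((𝒞.E.obj (op X)).map (𝒞.ιI Z)) ε = (𝒞.E.map (𝟙 X).op).app (𝒞.I Z) 0 := by
    rw [𝒞.I_injective Z X (((𝒞.E.obj (op X)).map (𝒞.ιI Z)) ε)]; simp
  obtain ⟨m, hm1, hm2⟩ := 𝒞.real_map (𝒞.ιI Z) (𝟙 X) hab (𝒞.real_zero (𝒞.I Z) X) h0
  have hs : a ≫ (m ≫ biprod.fst) = 𝟙 Z ≫ 𝒞.ιI Z := by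
    rw [← Category.assoc, hm1]; simp
  obtain ⟨c, hc1, hc2⟩ := 𝒞.et3 (𝟙 Z) (m ≫ biprod.fst) hab (𝒞.confI Z) hs
  refine ⟨c, ?_⟩
  simpa using hc2

/-- dimension shifting step -/
lemma key_step (𝒞 : ECat C) {X T K Z : C} (htri : 𝒞.Tri X T K)
    (hT : ∀ δ : (𝒞.E.obj (op T)).obj Z, δ = 0)
    (hK : ∀ δ : (𝒞.E.obj (op K)).obj (𝒞.Susp Z), δ = 0) :
    ∀ ε : (𝒞.E.obj (op X)).obj Z, ε = 0 := by
  obtain ⟨f, g, δ, hconf⟩ := htri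
  intro ε
  obtain ⟨c, hc⟩ := ext_of_hom 𝒞 ε
  obtain ⟨c', hc'⟩ := extend_lemma 𝒞 hconf c (hK _)
  have h1 : (𝒞.E.map c'.op).app Z (𝒞.δI Z) = 0 := hT _
  rw [hc, ← hc', op_comp, 𝒞.E.map_comp]
  simp [h1]

lemma checkN_vanish (𝒞 : ECat C) (𝒯 : Set C) :
    ∀ n : ℕ, ∀ X ∈ 𝒞.CheckN 𝒯 n, ∀ Y ∈ 𝒞.rperp 𝒯, ∀ i : ℕ, 𝒞.extVanish i X Y := by
  intro n
  induction n with
  | zero => intro X hX Y hY i; exact hY X hX i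
  | succ n ih =>
    intro X hX Y hY i
    obtain ⟨T, K, hT, htri, hK⟩ := hX
    intro δ
    have hK' := ih K hK Y hY (i + 1)
    have heq : 𝒞.Susp^[i + 1] Y = 𝒞.Susp (𝒞.Susp^[i] Y) :=
      Function.iterate_succ_apply' _ _ _
    rw [ECat.extVanish, heq] at hK'
    exact key_step 𝒞 htri (fun ε => hY T hT i ε) hK' δ

theorem stmt3 (𝒞 : ECat C) (𝒯 : Set C) (hso : 𝒞.SelfOrth 𝒯) :
    ∀ X₁ ∈ 𝒞.Check 𝒯, ∀ X₂ ∈ 𝒞.rperp 𝒯, ∀ i : ℕ, 𝒞.extVanish i X₁ X₂ := by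
  intro X₁ hX₁ X₂ hX₂ i
  obtain ⟨n, hmem⟩ := Set.mem_iUnion.mp hX₁
  exact checkN_vanish 𝒞 𝒯 n X₁ hmem X₂ hX₂ i

end ExtTilting
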